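/- Let n ≥ 2, x ∈ 𝔹ⁿ, and t > 0 with t(1−|x|) < 1. Then B_ρ(x, r) ⊂ B_c(x, t) ⊂ B_ρ(x, R), where r = log(1 + 2t(1−|x|)/((1+|x|)(1 + t(1−|x|)))) and R = min{R₁, R₂} with R₁ = 2·arsinh((exp(t(1−|x|)/(1 − t(1−|x|))) − 1)/(1+|x|)) and R₂ = log(1 + 2(exp(t(1−|x|)/(1 − t(1−|x|))) − 1)/(1−|x|)). -/

import Mathlib

open Metric Set

/-- Euclidean `n`-space. -/
abbrev E (n : ℕ) := EuclideanSpace ℝ (Fin n)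

/-- The Cassinian metric of a domain `D`:
`c_D(x,y) = sup_{p ∈ ∂D} |x-y| / (|x-p| |p-y|)`. -/
noncomputable def cassinian {n : ℕ} (D : Set (E n)) (x y : E n) : ℝ :=
  ⨆ p ∈ frontier D, dist x y / (dist x p * dist p y)

/-- The hyperbolic metric of the unit ball `𝔹ⁿ`, determined by
`sinh²(ρ(x,y)/2) = |x-y|²/((1-|x|²)(1-|y|²))`. -/
noncomputable def hyperDist {n : ℕ} (x y : E n) : ℝ :=
  2 * Real.arsinh (dist x y / Real.sqrt ((1 - ‖x‖ ^ 2) * (1 - ‖y‖ ^ 2)))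

section Auxiliary

lemma exists_boundary_pt {n : ℕ} (hn : 2 ≤ n) (x : E n) (hx : ‖x‖ < 1) :
    ∃ p : E n, ‖p‖ = 1 ∧ dist x p = 1 - ‖x‖ := by
  by_cases hx0 : x = 0
  · refine ⟨EuclideanSpace.single ⟨0, by omega⟩ 1, by simp, ?_⟩
    simp [hx0, dist_eq_norm]
  · have h0 : ‖x‖ ≠ 0 := norm_ne_zero_iff.2 hx0
    have h0' : 0 < ‖x‖ := norm_pos_iff.2 hx0
    refine ⟨‖x‖⁻¹ • x, ?_, ?_⟩
    · rw [norm_smul, norm_inv, norm_norm, inv_mul_cancel₀ h0]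
    · rw [dist_eq_norm]
      have : x - ‖x‖⁻¹ • x = (1 - ‖x‖⁻¹) • x := by
        rw [sub_smul, one_smul]
      rw [this, norm_smul, Real.norm_eq_abs, abs_of_nonpos (by
        have : 1 ≤ ‖x‖⁻¹ := (one_le_inv₀ h0').2 hx.le
        linarith)]
      field_simp
      ring

lemma dist_ge_of_sphere {n : ℕ} {p z : E n} (hp : ‖p‖ = 1) : 1 - ‖z‖ ≤ dist p z := by
  rw [dist_eq_norm]
  have := norm_sub_norm_le p z
  linarith

lemma cassinian_upper {n : ℕ} {x y : E n} (hx : ‖x‖ < 1) (hy : ‖y‖ < 1) :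
    cassinian (ball 0 1) x y ≤ dist x y / ((1 - ‖x‖) * (1 - ‖y‖)) := by
  have hx' : (0:ℝ) < 1 - ‖x‖ := by linarith
  have hy' : (0:ℝ) < 1 - ‖y‖ := by linarith
  unfold cassinian
  rw [frontier_ball (0 : E n) one_ne_zero]
  refine Real.iSup_le (fun p => Real.iSup_le (fun hp => ?_) (by positivity)) (by positivity)
  have hp1 : ‖p‖ = 1 := mem_sphere_zero_iff_norm.1 hp
  have h1 : 1 - ‖x‖ ≤ dist x p := by rw [dist_comm]; exact dist_ge_of_sphere hp1
  have h2 : 1 - ‖y‖ ≤ dist p y := dist_ge_of_sphere hp1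
  gcongr

lemma cassinian_lower {n : ℕ} {x y : E n} (hx : ‖x‖ < 1) (hy : ‖y‖ < 1)
    {p : E n} (hp : ‖p‖ = 1) :
    dist x y / (dist x p * dist p y) ≤ cassinian (ball 0 1) x y := by
  have hx' : (0:ℝ) < 1 - ‖x‖ := by linarith
  have hy' : (0:ℝ) < 1 - ‖y‖ := by linarith
  unfold cassinian
  rw [frontier_ball (0 : E n) one_ne_zero]
  set g : E n → ℝ := fun q => ⨆ _ : q ∈ sphere (0:E n) 1, dist x y / (dist x q * dist q y)
    with hg
  have hbdd : BddAbove (range g) := by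
    refine ⟨dist x y / ((1 - ‖x‖) * (1 - ‖y‖)), ?_⟩
    rintro z ⟨q, rfl⟩
    by_cases hq : q ∈ sphere (0:E n) 1
    · rw [hg]
      simp only
      rw [ciSup_pos hq]
      have hq1 : ‖q‖ = 1 := mem_sphere_zero_iff_norm.1 hq
      have h1 : 1 - ‖x‖ ≤ dist x q := by rw [dist_comm]; exact dist_ge_of_sphere hq1
      have h2 : 1 - ‖y‖ ≤ dist q y := dist_ge_of_sphere hq1
      gcongr
    · rw [hg]; simp only [hq]; rw [Real.iSup_of_isEmpty]; positivity
  have := le_ciSup hbdd p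
  rw [hg] at this
  simp only at this
  rwa [ciSup_pos (mem_sphere_zero_iff_norm.2 hp)] at this

lemma sq_le_imp {c k : ℝ} (hc : 0 ≤ c) (hk : 0 ≤ k) (h : c ^ 2 ≤ k ^ 2) : c ≤ k := by
  nlinarith

set_option maxHeartbeats 1000000 in
lemma incl1_num (t a b u : ℝ) (ht : 0 < t) (ha0 : 0 ≤ a) (ha1 : a < 1)
    (hs : t * (1 - a) < 1) (hb0 : 0 ≤ b) (hb1 : b < 1) (hba : b - a ≤ u) (hu : 0 ≤ u)
    (h2 : 2 * Real.arsinh (u / Real.sqrt ((1 - a ^ 2) * (1 - b ^ 2))) <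
      Real.log (1 + 2 * t * (1 - a) / ((1 + a) * (1 + t * (1 - a))))) :
    u < t * ((1 - a) * (1 - b)) := by
  have h1a : (0:ℝ) < 1 + a := by linarith
  have h1ta : (0:ℝ) < 1 + t * (1 - a) := by nlinarith
  have hden : (0:ℝ) < (1 + a) * (1 + t * (1 - a)) := mul_pos h1a h1ta
  have h1a' : (0:ℝ) < 1 - a := by linarith
  have hG0 : 0 ≤ t * (1 - a) / ((1 + a) * (1 + t * (1 - a))) :=
    div_nonneg (by nlinarith) hden.le
  have hL0 : (0:ℝ) < 1 + 2 * t * (1 - a) / ((1 + a) * (1 + t * (1 - a))) := by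
    have : 0 ≤ 2 * t * (1 - a) / ((1 + a) * (1 + t * (1 - a))) :=
      div_nonneg (by nlinarith) hden.le
    linarith
  have hargpos : (0:ℝ) < (1 - a ^ 2) * (1 - b ^ 2) :=
    mul_pos (by nlinarith) (by nlinarith)
  set S : ℝ := u / Real.sqrt ((1 - a ^ 2) * (1 - b ^ 2)) with hSdef
  have hS0 : 0 ≤ S := by positivity
  have hE : (S + Real.sqrt (1 + S ^ 2)) ^ 2 <
      1 + 2 * t * (1 - a) / ((1 + a) * (1 + t * (1 - a))) := by
    have h3 := Real.exp_lt_exp.2 h2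
    rw [Real.exp_log hL0, two_mul, Real.exp_add, Real.exp_arsinh] at h3
    calc (S + Real.sqrt (1 + S ^ 2)) ^ 2
        = (S + Real.sqrt (1 + S ^ 2)) * (S + Real.sqrt (1 + S ^ 2)) := sq _
      _ < _ := h3
  by_contra hcon
  push_neg at hcon
  have hu0 : 0 < u := lt_of_lt_of_le
    (by nlinarith [mul_pos ht (mul_pos h1a' (show (0:ℝ) < 1 - b by linarith))]) hcon
  have hSsq : S ^ 2 = u ^ 2 / ((1 - a ^ 2) * (1 - b ^ 2)) := by
    rw [hSdef, div_pow, Real.sq_sqrt hargpos.le]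
  have key3 : t * (1 - a) ^ 2 ≤ u * (1 + t * (1 - a)) := by
    nlinarith [mul_le_mul_of_nonneg_left (show (1 - a) ≤ (1 - b) + u by linarith)
      (show (0:ℝ) ≤ t * (1 - a) by nlinarith)]
  have hS2 : t * u / ((1 + a) * (1 + b)) ≤ S ^ 2 := by
    rw [hSsq, div_le_div_iff₀ (by nlinarith) hargpos]
    nlinarith [mul_nonneg (sub_nonneg.2 hcon)
      (show (0:ℝ) ≤ u * ((1 + a) * (1 + b)) by positivity)]
  have hmono : t * u / ((1 + a) * (1 + a + u)) ≤ t * u / ((1 + a) * (1 + b)) := by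
    apply div_le_div_of_nonneg_left (by positivity) (by nlinarith)
    nlinarith
  have hstep3 : t ^ 2 * (1 - a) ^ 2 / ((1 + a) * (1 + a + 2 * t * (1 - a)))
      ≤ t * u / ((1 + a) * (1 + a + u)) := by
    rw [div_le_div_iff₀ (by nlinarith) (by nlinarith)]
    nlinarith [mul_le_mul_of_nonneg_left key3 (show (0:ℝ) ≤ t * (1 + a) by positivity),
      mul_le_mul_of_nonneg_left key3 (show (0:ℝ) ≤ t * u by positivity)]
  have hG2Q : (t * (1 - a) / ((1 + a) * (1 + t * (1 - a)))) ^ 2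
      ≤ t ^ 2 * (1 - a) ^ 2 / ((1 + a) * (1 + a + 2 * t * (1 - a))) := by
    rw [div_pow, div_le_div_iff₀ (by positivity) (by nlinarith)]
    have base : (1 + a) * (1 + a + 2 * t * (1 - a)) ≤ ((1 + a) * (1 + t * (1 - a))) ^ 2 := by
      nlinarith [mul_nonneg (mul_nonneg ht.le h1a'.le) ha0,
        mul_nonneg (mul_nonneg (mul_nonneg ht.le h1a'.le) ha0) ha0,
        sq_nonneg (t * (1 - a) * (1 + a))]
    nlinarith [mul_le_mul_of_nonneg_left base (sq_nonneg (t * (1 - a)))]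
  have hGS : t * (1 - a) / ((1 + a) * (1 + t * (1 - a))) ≤ S := by
    nlinarith [hS2, hmono, hstep3, hG2Q, hS0, hG0]
  have hP2 : (Real.sqrt (1 + S ^ 2)) ^ 2 = 1 + S ^ 2 := Real.sq_sqrt (by positivity)
  have hP1 : 1 ≤ Real.sqrt (1 + S ^ 2) := by
    have h := Real.sqrt_le_sqrt (show (1:ℝ) ≤ 1 + S ^ 2 by nlinarith)
    rwa [Real.sqrt_one] at h
  have hLG : 1 + 2 * t * (1 - a) / ((1 + a) * (1 + t * (1 - a)))
      = 1 + 2 * (t * (1 - a) / ((1 + a) * (1 + t * (1 - a)))) := by ring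
  rw [hLG] at hE
  nlinarith [hE, hP2, hP1, hGS, hG0, hS0,
    mul_le_mul_of_nonneg_left hP1 hS0]

lemma jlemma (a b u : ℝ) (ha0 : 0 ≤ a) (ha1 : a < 1) (hb0 : 0 ≤ b) (hb1 : b < 1)
    (hab : a ≤ b) (hu : 0 ≤ u) (hu2 : u ≤ a + b) :
    u / Real.sqrt ((1 - a ^ 2) * (1 - b ^ 2)) ≤ Real.sinh (Real.log (1 + u / (1 - b))) := by
  have h1b : (0:ℝ) < 1 - b := by linarith
  have h1b2 : (0:ℝ) < 1 - b ^ 2 := by nlinarith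
  have hpos : (0:ℝ) < 1 + u / (1 - b) := by positivity
  have hsinh : Real.sinh (Real.log (1 + u / (1 - b)))
      = (u * (2 * (1 - b) + u)) / (2 * ((1 - b) * ((1 - b) + u))) := by
    rw [Real.sinh_log hpos]
    rw [div_eq_div_iff (by norm_num) (by positivity)]
    field_simp
    ring
  rw [hsinh]
  have hk2 : (1 - b ^ 2) ≤ Real.sqrt ((1 - a ^ 2) * (1 - b ^ 2)) := by
    have h := Real.sqrt_le_sqrt (show (1 - b ^ 2) ^ 2 ≤ (1 - a ^ 2) * (1 - b ^ 2) by
      nlinarith [mul_le_mul_of_nonneg_right (show 1 - b ^ 2 ≤ 1 - a ^ 2 by nlinarith) h1b2.le])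
    rwa [Real.sqrt_sq h1b2.le] at h
  calc u / Real.sqrt ((1 - a ^ 2) * (1 - b ^ 2)) ≤ u / (1 - b ^ 2) :=
        div_le_div_of_nonneg_left hu h1b2 hk2
    _ ≤ (u * (2 * (1 - b) + u)) / (2 * ((1 - b) * ((1 - b) + u))) := by
        rw [div_le_div_iff₀ h1b2 (by positivity)]
        nlinarith [mul_nonneg (mul_nonneg hu (sq_nonneg (1 - b)))
          (show (0:ℝ) ≤ 2 * b - u by linarith)]

set_option maxHeartbeats 1000000 in
lemma incl2_num (t a b u : ℝ) (ht : 0 < t) (ha0 : 0 ≤ a) (ha1 : a < 1)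
    (hs : t * (1 - a) < 1) (hb0 : 0 ≤ b) (hb1 : b < 1) (hu : 0 ≤ u)
    (habs : |b - a| ≤ u) (hu2 : u ≤ a + b)
    (hxc : u < t * ((1 - a) * ((1 - a) + u)))
    (hyc : u < t * ((1 - b) * ((1 - b) + u))) :
    2 * Real.arsinh (u / Real.sqrt ((1 - a ^ 2) * (1 - b ^ 2))) <
      min (2 * Real.arsinh ((Real.exp (t * (1 - a) / (1 - t * (1 - a))) - 1) / (1 + a)))
        (Real.log (1 + 2 * (Real.exp (t * (1 - a) / (1 - t * (1 - a))) - 1) / (1 - a))) := by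
  have h1a : (0:ℝ) < 1 - a := by linarith
  have h1b : (0:ℝ) < 1 - b := by linarith
  have h1s : (0:ℝ) < 1 - t * (1 - a) := by linarith
  set m : ℝ := t * (1 - a) / (1 - t * (1 - a)) with hmdef
  have hm0 : 0 < m := by rw [hmdef]; positivity
  clear_value m
  set K : ℝ := Real.exp m - 1 with hKdef
  clear_value K
  have hmK : m < K := by
    have := Real.add_one_lt_exp (ne_of_gt hm0)
    rw [hKdef]; linarith
  have hK0 : 0 < K := lt_trans hm0 hmK
  have hargpos : (0:ℝ) < (1 - a ^ 2) * (1 - b ^ 2) :=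
    mul_pos (by nlinarith) (by nlinarith)
  have hum : u < m * (1 - a) := by
    have h' : u * (1 - t * (1 - a)) < t * (1 - a) ^ 2 := by nlinarith
    rw [hmdef, div_mul_eq_mul_div, lt_div_iff₀ h1s]
    nlinarith
  have humb : (1 - b) ≤ (1 - a) → u < m * (1 - b) := by
    intro hd
    have h1sb : (0:ℝ) < 1 - t * (1 - b) := by nlinarith
    have h' : u * (1 - t * (1 - b)) < t * (1 - b) ^ 2 := by nlinarith
    have h'' : u * (1 - t * (1 - a)) < t * ((1 - b) * (1 - a)) := by nlinarith
    rw [hmdef, div_mul_eq_mul_div, lt_div_iff₀ h1s]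
    nlinarith
  set k : ℝ := Real.sqrt ((1 - a ^ 2) * (1 - b ^ 2)) with hkdef
  have hk0 : 0 < k := by rw [hkdef]; exact Real.sqrt_pos.2 hargpos
  have hk2 : k ^ 2 = (1 - a ^ 2) * (1 - b ^ 2) := by rw [hkdef]; exact Real.sq_sqrt hargpos.le
  rw [lt_min_iff]
  constructor
  · -- R₁
    have hS : u / k < K / (1 + a) := by
      rw [div_lt_div_iff₀ hk0 (by linarith)]
      rcases le_total b a with hba | hab
      · have hklow : (1 - a) * (1 + a) ≤ k := by
          refine sq_le_imp (by nlinarith) hk0.le ?_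
          rw [hk2]
          nlinarith [mul_le_mul_of_nonneg_left (show 1 - a ^ 2 ≤ 1 - b ^ 2 by nlinarith)
            (show (0:ℝ) ≤ 1 - a ^ 2 by nlinarith)]
        nlinarith [mul_pos hk0 (sub_pos.2 hmK)]
      · have hklow : (1 - b) * (1 + a) ≤ k := by
          refine sq_le_imp (by nlinarith) hk0.le ?_
          rw [hk2]
          nlinarith [mul_nonneg (mul_nonneg h1a.le h1b.le) (show (0:ℝ) ≤ b - a by linarith),
            mul_nonneg (mul_nonneg h1b.le h1b.le) (show (0:ℝ) ≤ b - a by linarith)]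
        have humb' := humb (by linarith)
        nlinarith [mul_pos hk0 (sub_pos.2 hmK)]
    have := Real.arsinh_lt_arsinh.2 hS
    linarith
  · -- R₂
    have hKK : 2 * K ≤ 2 * K / (1 - a) := by
      rw [le_div_iff₀ h1a]; nlinarith
    have hq : 1 + m + m ^ 2 / 2 ≤ Real.exp m := by
      have h := Real.sum_le_exp_of_nonneg hm0.le 3
      have he : ∑ i ∈ Finset.range 3, m ^ i / (Nat.factorial i : ℝ) = 1 + m + m ^ 2 / 2 := by
        norm_num [Finset.sum_range_succ, Nat.factorial]
      rw [he] at h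
      exact h
    have hmain : ∀ z : ℝ, 0 ≤ z → z < m →
        2 * Real.log (1 + z) < Real.log (1 + 2 * K / (1 - a)) := by
      intro z hz0 hzm
      have h1 : (1 + z) ^ 2 < 1 + 2 * K / (1 - a) := by
        have hKm : 2 * m + m ^ 2 ≤ 2 * K := by
          rw [hKdef]; nlinarith
        nlinarith [mul_nonneg (sub_nonneg.2 hzm.le) (show (0:ℝ) ≤ m + z by linarith)]
      calc 2 * Real.log (1 + z) = Real.log ((1 + z) ^ 2) := by
            rw [Real.log_pow]; norm_num
        _ < _ := Real.log_lt_log (by positivity) h1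
    rcases le_total a b with hab | hba
    · have hj := jlemma a b u ha0 ha1 hb0 hb1 hab hu hu2
      rw [← hkdef] at hj
      have harsinh : Real.arsinh (u / k) ≤ Real.log (1 + u / (1 - b)) := by
        rw [← Real.arsinh_sinh (Real.log (1 + u / (1 - b)))]
        exact Real.arsinh_le_arsinh.2 hj
      have hz : u / (1 - b) < m := by
        rw [div_lt_iff₀ h1b]
        have := humb (by linarith)
        linarith [this]
      have := hmain (u / (1 - b)) (by positivity) hz
      linarith
    · have hj := jlemma b a u hb0 hb1 ha0 ha1 hba hu (by linarith)
      rw [mul_comm (1 - b ^ 2) (1 - a ^ 2), ← hkdef] at hj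
      have harsinh : Real.arsinh (u / k) ≤ Real.log (1 + u / (1 - a)) := by
        rw [← Real.arsinh_sinh (Real.log (1 + u / (1 - a)))]
        exact Real.arsinh_le_arsinh.2 hj
      have hz : u / (1 - a) < m := by
        rw [div_lt_iff₀ h1a]; linarith [hum]
      have := hmain (u / (1 - a)) (by positivity) hz
      linarith

end Auxiliary

/-- **Refined inclusion of Cassinian balls of the unit ball between hyperbolic balls.**
Let `x ∈ 𝔹ⁿ`, `t > 0` with `t(1-|x|) < 1`.  Then `B_ρ(x,r) ⊆ B_c(x,t) ⊆ B_ρ(x,R)` with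
`r = log(1 + 2t(1-|x|)/((1+|x|)(1+t(1-|x|))))` and `R = min{R₁, R₂}`, where
`R₁ = 2 arsinh((exp(t(1-|x|)/(1-t(1-|x|))) - 1)/(1+|x|))` and
`R₂ = log(1 + 2(exp(t(1-|x|)/(1-t(1-|x|))) - 1)/(1-|x|))`. -/
theorem hyperbolicBall_subset_cassinianBall_subset' (n : ℕ) (hn : 2 ≤ n)
    (x : E n) (hx : x ∈ ball (0 : E n) 1) (t : ℝ) (ht : 0 < t)
    (ht1 : t * (1 - ‖x‖) < 1) :
    {y ∈ ball (0 : E n) 1 |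
          hyperDist x y
            < Real.log (1 + 2 * t * (1 - ‖x‖) / ((1 + ‖x‖) * (1 + t * (1 - ‖x‖))))}
        ⊆ {y ∈ ball (0 : E n) 1 | cassinian (ball (0 : E n) 1) x y < t} ∧
      {y ∈ ball (0 : E n) 1 | cassinian (ball (0 : E n) 1) x y < t}
        ⊆ {y ∈ ball (0 : E n) 1 |
          hyperDist x y
            < min
              (2 * Real.arsinh
                ((Real.exp (t * (1 - ‖x‖) / (1 - t * (1 - ‖x‖))) - 1) / (1 + ‖x‖)))
              (Real.log
                (1 + 2 * (Real.exp (t * (1 - ‖x‖) / (1 - t * (1 - ‖x‖))) - 1) / (1 - ‖x‖)))} := by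
  have hx1 : ‖x‖ < 1 := mem_ball_zero_iff.1 hx
  have hx0 : (0:ℝ) ≤ ‖x‖ := norm_nonneg x
  constructor
  · rintro y ⟨hyb, hyρ⟩
    have hy1 : ‖y‖ < 1 := mem_ball_zero_iff.1 hyb
    have hy0 : (0:ℝ) ≤ ‖y‖ := norm_nonneg y
    refine ⟨hyb, ?_⟩
    have hba : ‖y‖ - ‖x‖ ≤ dist x y := by
      have h := abs_norm_sub_norm_le y x
      rw [← dist_eq_norm, dist_comm] at h
      exact le_trans (le_abs_self _) h
    have hkey : dist x y < t * ((1 - ‖x‖) * (1 - ‖y‖)) := by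
      apply incl1_num t ‖x‖ ‖y‖ (dist x y) ht hx0 hx1 ht1 hy0 hy1 hba dist_nonneg
      simpa [hyperDist] using hyρ
    calc cassinian (ball 0 1) x y ≤ dist x y / ((1 - ‖x‖) * (1 - ‖y‖)) :=
          cassinian_upper hx1 hy1
      _ < t := by
          rw [div_lt_iff₀ (by nlinarith)]
          linarith [hkey]
  · rintro y ⟨hyb, hyc⟩
    have hy1 : ‖y‖ < 1 := mem_ball_zero_iff.1 hyb
    have hy0 : (0:ℝ) ≤ ‖y‖ := norm_nonneg y
    refine ⟨hyb, ?_⟩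
    have hdn : (0:ℝ) < 1 - ‖x‖ := by linarith
    have hδn : (0:ℝ) < 1 - ‖y‖ := by linarith
    have habs : |‖y‖ - ‖x‖| ≤ dist x y := by
      have h := abs_norm_sub_norm_le y x
      rwa [← dist_eq_norm, dist_comm] at h
    have hu2 : dist x y ≤ ‖x‖ + ‖y‖ := by
      rw [dist_eq_norm]
      exact norm_sub_le x y
    -- bound from the boundary point nearest to x
    obtain ⟨p₀, hp₀, hdp₀⟩ := exists_boundary_pt hn x hx1
    have hxc : dist x y < t * ((1 - ‖x‖) * ((1 - ‖x‖) + dist x y)) := by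
      have hpy : dist p₀ y ≤ (1 - ‖x‖) + dist x y := by
        have := dist_triangle p₀ x y
        rw [dist_comm p₀ x, hdp₀] at this
        linarith
      have hpy0 : 0 < dist p₀ y := lt_of_lt_of_le hδn (dist_ge_of_sphere hp₀)
      have hlow : dist x y / ((1 - ‖x‖) * ((1 - ‖x‖) + dist x y))
          ≤ dist x y / (dist x p₀ * dist p₀ y) := by
        apply div_le_div_of_nonneg_left dist_nonneg (by rw [hdp₀] at *; positivity)
        rw [hdp₀]
        exact mul_le_mul_of_nonneg_left hpy hdn.le
      have := lt_of_le_of_lt (le_trans hlow (cassinian_lower hx1 hy1 hp₀)) hyc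
      rw [div_lt_iff₀ (by positivity)] at this
      linarith
    -- bound from the boundary point nearest to y
    obtain ⟨p₁, hp₁, hdp₁⟩ := exists_boundary_pt hn y hy1
    have hyc' : dist x y < t * ((1 - ‖y‖) * ((1 - ‖y‖) + dist x y)) := by
      have hpx : dist x p₁ ≤ (1 - ‖y‖) + dist x y := by
        have := dist_triangle x y p₁
        rw [hdp₁] at this
        linarith
      have hpx0 : 0 < dist x p₁ := lt_of_lt_of_le hdn (by rw [dist_comm]; exact dist_ge_of_sphere hp₁)
      have hpy1 : dist p₁ y = 1 - ‖y‖ := by rw [dist_comm]; exact hdp₁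
      have hlow : dist x y / (((1 - ‖y‖) + dist x y) * (1 - ‖y‖))
          ≤ dist x y / (dist x p₁ * dist p₁ y) := by
        apply div_le_div_of_nonneg_left dist_nonneg (by rw [hpy1] at *; positivity)
        rw [hpy1]
        exact mul_le_mul_of_nonneg_right hpx hδn.le
      have := lt_of_le_of_lt (le_trans hlow (cassinian_lower hx1 hy1 hp₁)) hyc
      rw [div_lt_iff₀ (by positivity)] at this
      nlinarith
    have := incl2_num t ‖x‖ ‖y‖ (dist x y) ht hx0 hx1 ht1 hy0 hy1 dist_nonneg
      habs hu2 hxc hyc'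
    simpa [hyperDist] using this
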